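/- Let N and m be positive integers with 2m ≤ N, and let A ∈ ℂ^{m×N} be the partial IDFT matrix. If the column indices ω_p, ω_q ∈ {1,…,N} satisfy N/(2m) ≤ |ω_p − ω_q| ≤ N − N/(2m), then the column correlation satisfies f(ω_p, ω_q) ≤ 1/(m·sin(π/(2m))). -/

import Mathlib

set_option maxHeartbeats 1000000
open Complex Real

lemma my_abs_exp_I_sub_one (θ : ℝ) :
    ‖Complex.exp (θ * Complex.I) - 1‖ = 2 * |Real.sin (θ / 2)| := by
  rw [Complex.exp_mul_I]
  have : Complex.cos θ + Complex.sin θ * Complex.I - 1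
      = ((Real.cos θ - 1 : ℝ) : ℂ) + (Real.sin θ : ℝ) * Complex.I := by
    push_cast [Complex.ofReal_cos, Complex.ofReal_sin]; ring
  rw [this, Complex.norm_add_mul_I]
  have h1 := Real.sin_sq_add_cos_sq θ
  have h2 : Real.cos θ = Real.cos (θ/2) ^ 2 - Real.sin (θ/2) ^ 2 := by
    rw [← Real.cos_two_mul']; ring_nf
  have h3 := Real.sin_sq_add_cos_sq (θ/2)
  have key : (Real.cos θ - 1) ^ 2 + Real.sin θ ^ 2 = (2 * |Real.sin (θ/2)|) ^ 2 := by
    rw [mul_pow, _root_.sq_abs]; nlinarith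
  rw [key, Real.sqrt_sq (by positivity)]

lemma my_sin_lb {a x : ℝ} (ha : 0 ≤ a) (h1 : a ≤ x) (h2 : x ≤ π - a) :
    Real.sin a ≤ Real.sin x := by
  have hπ := Real.pi_pos
  rcases le_or_gt x (π/2) with h | h
  · exact Real.sin_le_sin_of_le_of_le_pi_div_two (by linarith) h h1
  · rw [← Real.sin_pi_sub x]
    exact Real.sin_le_sin_of_le_of_le_pi_div_two (by linarith) (by linarith) (by linarith)

/-- The ω-th column of the partial IDFT matrix `A ∈ ℂ^{m×N}` with entries
`A_{l,ω} = (1/√m)·exp(2πi(l−1)(ω−1)/N)` (here indexed from 0). -/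
noncomputable def idftCol (N m : ℕ) (ω : Fin N) : EuclideanSpace ℂ (Fin m) :=
  WithLp.toLp 2 (fun l : Fin m => ((1 / Real.sqrt m : ℝ) : ℂ) *
    Complex.exp (2 * Real.pi * Complex.I * ((l : ℕ) : ℂ) * ((ω : ℕ) : ℂ) / (N : ℂ)))

/-- if `2m ≤ N` and the column indices satisfy
`N/(2m) ≤ |ω_p − ω_q| ≤ N − N/(2m)`, then the column correlation of the partial IDFT
matrix satisfies `f(ω_p, ω_q) ≤ 1/(m·sin(π/(2m)))`. -/
theorem column_correlation_bound (N m : ℕ) (hN : 0 < N) (hm : 0 < m) (h2m : 2 * m ≤ N)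
    (ωp ωq : Fin N)
    (hlow : (N : ℝ) / (2 * m) ≤ |((ωp : ℕ) : ℝ) - ((ωq : ℕ) : ℝ)|)
    (hhigh : |((ωp : ℕ) : ℝ) - ((ωq : ℕ) : ℝ)| ≤ (N : ℝ) - (N : ℝ) / (2 * m)) :
    ‖(inner ℂ (idftCol N m ωp) (idftCol N m ωq) : ℂ)‖ ≤
      1 / (m * Real.sin (Real.pi / (2 * m))) := by
  have hπ := Real.pi_pos
  have hmR : (0:ℝ) < m := by exact_mod_cast hm
  have hNR : (0:ℝ) < N := by exact_mod_cast hN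
  have hNC : (N:ℂ) ≠ 0 := by exact_mod_cast hNR.ne'
  set d : ℝ := ((ωq : ℕ) : ℝ) - ((ωp : ℕ) : ℝ) with hd
  have habs : |((ωp : ℕ) : ℝ) - ((ωq : ℕ) : ℝ)| = |d| := abs_sub_comm _ _
  rw [habs] at hlow hhigh
  set θ : ℝ := 2 * π * d / N with hθ
  set z : ℂ := Complex.exp (θ * Complex.I) with hz
  -- sine bounds
  have h2mR : (0:ℝ) < 2 * m := by positivity
  have hlow2 : (N:ℝ) ≤ |d| * (2*m) := by rwa [div_le_iff₀ h2mR] at hlow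
  have hhigh2 : |d| * (2*m) ≤ (N:ℝ) * (2*m) - N := by
    have := mul_le_mul_of_nonneg_right hhigh h2mR.le
    have hc : ((N:ℝ)/(2*m)) * (2*m) = N := div_mul_cancel₀ _ h2mR.ne'
    nlinarith
  have h1 : π/(2*m) ≤ π * |d| / N := by
    rw [div_le_div_iff₀ h2mR hNR]
    nlinarith
  have h2 : π * |d| / N ≤ π - π/(2*m) := by
    have hrhs : π - π/(2*(m:ℝ)) = (π * (2*m) - π)/(2*m) := by field_simp
    rw [hrhs, div_le_div_iff₀ hNR h2mR]
    nlinarith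
  set s0 : ℝ := Real.sin (π/(2*(m:ℝ))) with hs0
  have hs0pos : 0 < s0 := by
    apply Real.sin_pos_of_pos_of_lt_pi (by positivity)
    rw [div_lt_iff₀ h2mR]
    nlinarith [(by exact_mod_cast hm : (1:ℝ) ≤ m)]
  have hπ2m : 0 < π/(2*(m:ℝ)) := by positivity
  have hhalf : θ / 2 = π * d / N := by rw [hθ]; ring
  have hsin_abs : |Real.sin (θ/2)| = Real.sin (π * |d| / N) := by
    rw [hhalf]
    rcases le_or_gt 0 d with h | h
    · rw [_root_.abs_of_nonneg h]
      rw [_root_.abs_of_nonneg]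
      apply Real.sin_nonneg_of_nonneg_of_le_pi (by positivity)
      have h2' := h2
      rw [_root_.abs_of_nonneg h] at h2'
      linarith
    · rw [_root_.abs_of_neg h]
      have hb1 : π * d / N ≤ 0 := by
        apply div_nonpos_of_nonpos_of_nonneg _ hNR.le
        nlinarith
      have hb2 : -π ≤ π * d / N := by
        have h2' := h2
        rw [_root_.abs_of_neg h] at h2'
        have : π * -d / N = -(π * d / N) := by ring
        rw [this] at h2'
        linarith
      rw [_root_.abs_of_nonpos (Real.sin_nonpos_of_nonpos_of_neg_pi_le hb1 hb2)]
      rw [show π * -d / N = -(π * d / N) by ring, Real.sin_neg]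
  have hsin_lb : s0 ≤ |Real.sin (θ/2)| := by
    rw [hsin_abs]
    exact my_sin_lb hπ2m.le h1 h2
  -- inner product formula
  have hterm : ∀ l : Fin m, (starRingEnd ℂ) (idftCol N m ωp l) * idftCol N m ωq l
      = (1/(m:ℂ)) * z ^ (l:ℕ) := by
    intro l
    have hc : ((1/Real.sqrt m : ℝ):ℂ) * ((1/Real.sqrt m : ℝ):ℂ) = (1/(m:ℂ)) := by
      rw [← Complex.ofReal_mul, div_mul_div_comm, one_mul, Real.mul_self_sqrt hmR.le]
      push_cast
      ring
    simp only [idftCol, PiLp.toLp_apply, map_mul, ← Complex.exp_conj, map_div₀, Complex.conj_I,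
      Complex.conj_ofReal, map_ofNat, Complex.conj_natCast]
    rw [mul_mul_mul_comm, hc, ← Complex.exp_add, hz, ← Complex.exp_nat_mul]
    refine congrArg _ (congrArg Complex.exp ?_)
    rw [hθ, hd]
    push_cast
    field_simp
    ring
  have hinner : (inner ℂ (idftCol N m ωp) (idftCol N m ωq) : ℂ)
      = (1/(m:ℂ)) * ∑ i ∈ Finset.range m, z ^ i := by
    rw [PiLp.inner_apply]
    simp_rw [RCLike.inner_apply]
    rw [Finset.mul_sum, ← Fin.sum_univ_eq_sum_range (fun i => (1/(m:ℂ)) * z ^ i)]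
    exact Finset.sum_congr rfl fun l _ => (mul_comm _ _).trans (hterm l)
  have habsz1 : ‖z - 1‖ = 2 * |Real.sin (θ/2)| := my_abs_exp_I_sub_one θ
  have hz1pos : 0 < ‖z - 1‖ := by rw [habsz1]; nlinarith
  have hz1 : z ≠ 1 := by
    intro h
    rw [h, sub_self, norm_zero] at hz1pos
    exact lt_irrefl _ hz1pos
  have hnorm : ‖(inner ℂ (idftCol N m ωp) (idftCol N m ωq) : ℂ)‖
      = (1/(m:ℝ)) * (‖z^m - 1‖ / ‖z - 1‖) := by
    rw [hinner, geom_sum_eq hz1, norm_mul, norm_div, norm_one, Complex.norm_natCast,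
      norm_div]
  have hzabs : ‖z‖ = 1 := Complex.norm_exp_ofReal_mul_I θ
  have hnum : ‖z^m - 1‖ ≤ 2 := by
    have h := norm_sub_le (z^m) (1:ℂ)
    simp only [norm_pow, hzabs, one_pow, norm_one] at h
    linarith
  have hden : 2 * s0 ≤ ‖z - 1‖ := by rw [habsz1]; nlinarith
  rw [hnorm]
  have hfrac : ‖z^m - 1‖ / ‖z - 1‖ ≤ 2 / (2 * s0) :=
    div_le_div₀ (by norm_num) hnum (by positivity) hden
  calc (1/(m:ℝ)) * (‖z^m - 1‖ / ‖z - 1‖)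
      ≤ (1/(m:ℝ)) * (2 / (2 * s0)) := by
        apply mul_le_mul_of_nonneg_left hfrac (by positivity)
      _ = 1 / (m * s0) := by
        rw [hs0]
        field_simp
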